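/- There exists τ ∈ [0,1] that is a threshold for V, i.e., V(p) = HP-value(p) for every p ∈ [0, τ] and V(p) = LP-value(p) for every p ∈ [τ, 1]. (Thus the optimal stationary policy offers a high-privacy coupon exactly when the belief of being Alerted is at most τ.) -/

import Mathlib

/-- Two-state consumer model: transition probabilities `lNA ≤ lAA`, costs
`CHN ≤ CL ≤ CHA`, discount factor `β ∈ (0,1)`. -/
structure CouponModel where
  lNA : ℝ
  lAA : ℝ
  CHN : ℝ
  CL : ℝ
  CHA : ℝ
  β : ℝ
  lNA_nonneg : 0 ≤ lNA
  lNA_le_lAA : lNA ≤ lAA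
  lAA_le_one : lAA ≤ 1
  CHN_le_CL : CHN ≤ CL
  CL_le_CHA : CL ≤ CHA
  β_pos : 0 < β
  β_lt_one : β < 1

namespace CouponModel

/-- Belief-update map `T(p) = (1-p)·λNA + p·λAA`. -/
noncomputable def T (M : CouponModel) (p : ℝ) : ℝ := (1 - p) * M.lNA + p * M.lAA

/-- Bellman operator. -/
noncomputable def B (M : CouponModel) (f : ℝ → ℝ) (p : ℝ) : ℝ :=
  min (M.CL + M.β * f (M.T p))
    ((1 - p) * M.CHN + p * M.CHA + M.β * ((1 - p) * f M.lNA + p * f M.lAA))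

/-- A function `f : ℝ → ℝ` is bounded on the belief space `[0,1]`. -/
def IsBdd (f : ℝ → ℝ) : Prop := ∃ C : ℝ, ∀ p ∈ Set.Icc (0:ℝ) 1, |f p| ≤ C

/-- `V` is a bounded fixed point of the Bellman operator on `[0,1]`. -/
def IsValue (M : CouponModel) (V : ℝ → ℝ) : Prop :=
  IsBdd V ∧ ∀ p ∈ Set.Icc (0:ℝ) 1, V p = M.B V p

/-- Value of offering the low-privacy coupon at belief `p`. -/
noncomputable def LPval (M : CouponModel) (V : ℝ → ℝ) (p : ℝ) : ℝ :=
  M.CL + M.β * V (M.T p)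

/-- Value of offering the high-privacy coupon at belief `p`. -/
noncomputable def HPval (M : CouponModel) (V : ℝ → ℝ) (p : ℝ) : ℝ :=
  (1 - p) * M.CHN + p * M.CHA + M.β * ((1 - p) * V M.lNA + p * V M.lAA)

/-- `τ` is a threshold for `V`: HP is optimal below `τ`, LP is optimal above `τ`. -/
def IsThreshold (M : CouponModel) (V : ℝ → ℝ) (τ : ℝ) : Prop :=
  τ ∈ Set.Icc (0:ℝ) 1 ∧
    (∀ p ∈ Set.Icc (0:ℝ) τ, V p = M.HPval V p) ∧
    (∀ p ∈ Set.Icc τ (1:ℝ), V p = M.LPval V p)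

end CouponModel


open Set

section Aux

variable (M : CouponModel)

namespace CouponModel

lemma lNA_mem : M.lNA ∈ Icc (0:ℝ) 1 :=
  ⟨M.lNA_nonneg, M.lNA_le_lAA.trans M.lAA_le_one⟩

lemma lAA_mem : M.lAA ∈ Icc (0:ℝ) 1 :=
  ⟨M.lNA_nonneg.trans M.lNA_le_lAA, M.lAA_le_one⟩

lemma T_mem {p : ℝ} (hp : p ∈ Icc (0:ℝ) 1) : M.T p ∈ Icc (0:ℝ) 1 := by
  obtain ⟨h0, h1⟩ := hp
  constructor
  · have := M.lNA_nonneg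
    have := M.lNA_le_lAA
    unfold T; nlinarith
  · have := M.lAA_le_one
    have := M.lNA_le_lAA
    unfold T; nlinarith

lemma T_affine {a b x y : ℝ} (hab : a + b = 1) :
    M.T (a * x + b * y) = a * M.T x + b * M.T y := by
  unfold T; linear_combination (-M.lNA) * hab

end CouponModel

end Aux
section Aux2

open Set

namespace CouponModel

variable (M : CouponModel)

lemma β_nonneg : (0:ℝ) ≤ M.β := M.β_pos.le

lemma B_contract {f g : ℝ → ℝ} {C : ℝ}
    (h : ∀ q ∈ Icc (0:ℝ) 1, |f q - g q| ≤ C) :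
    ∀ p ∈ Icc (0:ℝ) 1, |M.B f p - M.B g p| ≤ M.β * C := by
  intro p hp
  obtain ⟨hp0, hp1⟩ := hp
  have hβ := M.β_nonneg
  refine le_trans (abs_min_sub_min_le_max _ _ _ _) (max_le ?_ ?_)
  · have h1 : M.CL + M.β * f (M.T p) - (M.CL + M.β * g (M.T p))
        = M.β * (f (M.T p) - g (M.T p)) := by ring
    rw [h1, abs_mul, abs_of_nonneg hβ]
    exact mul_le_mul_of_nonneg_left (h _ (M.T_mem ⟨hp0, hp1⟩)) hβ
  · have h1 : (1 - p) * M.CHN + p * M.CHA + M.β * ((1 - p) * f M.lNA + p * f M.lAA)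
        - ((1 - p) * M.CHN + p * M.CHA + M.β * ((1 - p) * g M.lNA + p * g M.lAA))
        = M.β * ((1 - p) * (f M.lNA - g M.lNA) + p * (f M.lAA - g M.lAA)) := by ring
    rw [h1, abs_mul, abs_of_nonneg hβ]
    have hNA := h _ M.lNA_mem
    have hAA := h _ M.lAA_mem
    have hC : 0 ≤ C := le_trans (abs_nonneg _) hNA
    have hin : |(1 - p) * (f M.lNA - g M.lNA) + p * (f M.lAA - g M.lAA)| ≤ C := by
      refine le_trans (abs_add_le _ _) ?_
      rw [abs_mul, abs_mul, abs_of_nonneg (by linarith : (0:ℝ) ≤ 1 - p),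
        abs_of_nonneg hp0]
      nlinarith [abs_nonneg (f M.lNA - g M.lNA), abs_nonneg (f M.lAA - g M.lAA)]
    exact mul_le_mul_of_nonneg_left hin hβ

lemma comp_T_concaveOn {f : ℝ → ℝ} (hf : ConcaveOn ℝ (Icc (0:ℝ) 1) f) :
    ConcaveOn ℝ (Icc (0:ℝ) 1) (fun p => f (M.T p)) := by
  refine ⟨convex_Icc 0 1, fun x hx y hy a b ha hb hab => ?_⟩
  have h1 : M.T (a • x + b • y) = a • M.T x + b • M.T y := by
    simpa [smul_eq_mul] using M.T_affine (x := x) (y := y) hab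
  simp only [h1]
  exact hf.2 (M.T_mem hx) (M.T_mem hy) ha hb hab

lemma affine_concaveOn (c d : ℝ) : ConcaveOn ℝ (Icc (0:ℝ) 1) (fun p => c + p * d) := by
  refine ⟨convex_Icc 0 1, fun x _ y _ a b _ _ hab => le_of_eq ?_⟩
  simp only [smul_eq_mul]
  linear_combination c * hab

lemma affine_convexOn (c d : ℝ) : ConvexOn ℝ (Icc (0:ℝ) 1) (fun p => c + p * d) := by
  refine ⟨convex_Icc 0 1, fun x _ y _ a b _ _ hab => le_of_eq ?_⟩
  simp only [smul_eq_mul]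
  linear_combination (-c) * hab

lemma B_concaveOn {f : ℝ → ℝ} (hf : ConcaveOn ℝ (Icc (0:ℝ) 1) f) :
    ConcaveOn ℝ (Icc (0:ℝ) 1) (M.B f) := by
  have h1 : ConcaveOn ℝ (Icc (0:ℝ) 1) (fun p => M.CL + M.β * f (M.T p)) := by
    refine ⟨convex_Icc 0 1, fun x hx y hy a b ha hb hab => ?_⟩
    have hT : M.T (a • x + b • y) = a • M.T x + b • M.T y := by
      simpa [smul_eq_mul] using M.T_affine (x := x) (y := y) hab
    simp only [smul_eq_mul] at hT ⊢
    rw [hT]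
    have h2 := hf.2 (M.T_mem hx) (M.T_mem hy) ha hb hab
    simp only [smul_eq_mul] at h2
    have h3 := mul_le_mul_of_nonneg_left h2 M.β_nonneg
    have h4 : a * (M.CL + M.β * f (M.T x)) + b * (M.CL + M.β * f (M.T y))
        = M.CL + M.β * (a * f (M.T x) + b * f (M.T y)) := by
      linear_combination M.CL * hab
    rw [h4]
    linarith
  have h2 : ConcaveOn ℝ (Icc (0:ℝ) 1)
      (fun p => (1 - p) * M.CHN + p * M.CHA
        + M.β * ((1 - p) * f M.lNA + p * f M.lAA)) := by
    have := affine_concaveOn (M.CHN + M.β * f M.lNA)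
      (M.CHA - M.CHN + M.β * (f M.lAA - f M.lNA))
    have heq : (fun p : ℝ => M.CHN + M.β * f M.lNA
        + p * (M.CHA - M.CHN + M.β * (f M.lAA - f M.lNA)))
        = (fun p => (1 - p) * M.CHN + p * M.CHA
          + M.β * ((1 - p) * f M.lNA + p * f M.lAA)) := by
      funext p; ring
    rwa [heq] at this
  have h3 := h1.inf h2
  have heq : M.B f = (fun p => M.CL + M.β * f (M.T p)) ⊓
      (fun p => (1 - p) * M.CHN + p * M.CHA
        + M.β * ((1 - p) * f M.lNA + p * f M.lAA)) := by
    funext p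
    simp [CouponModel.B, Pi.inf_apply]
  rwa [heq]

lemma T_continuous : Continuous M.T := by
  unfold CouponModel.T; fun_prop

lemma B_continuous {f : ℝ → ℝ} (hf : Continuous f) : Continuous (M.B f) := by
  unfold CouponModel.B
  have := M.T_continuous
  fun_prop

end CouponModel

/-- Iterates of the Bellman operator starting from the zero function. -/
noncomputable def CouponModel.iter (M : CouponModel) : ℕ → ℝ → ℝ
  | 0 => fun _ => 0
  | n + 1 => M.B (M.iter n)

namespace CouponModel

end CouponModel
end Aux2
/-- There exists a threshold `τ ∈ [0,1]` for the value function: HP is optimal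
on `[0,τ]` and LP is optimal on `[τ,1]`. -/
theorem exists_threshold (M : CouponModel) (V : ℝ → ℝ) (hV : M.IsValue V) :
    ∃ τ : ℝ, M.IsThreshold V τ := by
  classical
  obtain ⟨⟨C, hC⟩, hfix⟩ := hV
  have hβ0 := M.β_nonneg
  have hβ1 := M.β_lt_one
  -- properties of the Bellman iterates
  have hconc : ∀ n, ConcaveOn ℝ (Set.Icc (0:ℝ) 1) (M.iter n) := by
    intro n; induction n with
    | zero => exact concaveOn_const 0 (convex_Icc 0 1)
    | succ n ih => exact M.B_concaveOn ih
  have hcont : ∀ n, Continuous (M.iter n) := by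
    intro n; induction n with
    | zero => exact continuous_const
    | succ n ih => exact M.B_continuous ih
  have hbound : ∀ n, ∀ p ∈ Set.Icc (0:ℝ) 1, |M.iter n p - V p| ≤ M.β ^ n * C := by
    intro n; induction n with
    | zero =>
      intro p hp
      simpa [CouponModel.iter, abs_sub_comm] using hC p hp
    | succ n ih =>
      intro p hp
      have h1 : V p = M.B V p := hfix p hp
      have h2 : |M.B (M.iter n) p - M.B V p| ≤ M.β * (M.β ^ n * C) :=
        M.B_contract ih p hp
      calc |M.iter (n+1) p - V p| = |M.B (M.iter n) p - M.B V p| := by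
            rw [← h1]; rfl
        _ ≤ M.β * (M.β ^ n * C) := h2
        _ = M.β ^ (n+1) * C := by ring
  have hgeo : Filter.Tendsto (fun n => M.β ^ n * C) Filter.atTop (nhds 0) := by
    have := (tendsto_pow_atTop_nhds_zero_of_lt_one hβ0 hβ1).mul_const C
    simpa using this
  have hpt : ∀ p ∈ Set.Icc (0:ℝ) 1,
      Filter.Tendsto (fun n => M.iter n p) Filter.atTop (nhds (V p)) := by
    intro p hp
    have h0 : Filter.Tendsto (fun n => M.iter n p - V p) Filter.atTop (nhds 0) :=
      squeeze_zero_norm (fun n => by simpa [Real.norm_eq_abs] using hbound n p hp) hgeo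
    simpa using h0.add_const (V p)
  -- V is concave on [0,1]
  have hVconc : ConcaveOn ℝ (Set.Icc (0:ℝ) 1) V := by
    refine ⟨convex_Icc 0 1, fun x hx y hy a b ha hb hab => ?_⟩
    have hz : a • x + b • y ∈ Set.Icc (0:ℝ) 1 := (convex_Icc 0 1) hx hy ha hb hab
    have hlim1 : Filter.Tendsto (fun n => a * M.iter n x + b * M.iter n y)
        Filter.atTop (nhds (a * V x + b * V y)) :=
      ((hpt x hx).const_mul a).add ((hpt y hy).const_mul b)
    have hle : ∀ n, a * M.iter n x + b * M.iter n y ≤ M.iter n (a • x + b • y) :=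
      fun n => by simpa [smul_eq_mul] using (hconc n).2 hx hy ha hb hab
    have := le_of_tendsto_of_tendsto' hlim1 (hpt _ hz) hle
    simpa [smul_eq_mul] using this
  -- V is continuous on [0,1]
  have hVcont : ContinuousOn V (Set.Icc (0:ℝ) 1) := by
    have hu : TendstoUniformlyOn (fun n => M.iter n) V Filter.atTop (Set.Icc 0 1) := by
      rw [Metric.tendstoUniformlyOn_iff]
      intro ε hε
      have hev : ∀ᶠ n in Filter.atTop, M.β ^ n * C < ε := hgeo.eventually_lt_const hε
      filter_upwards [hev] with n hn p hp
      rw [Real.dist_eq, abs_sub_comm]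
      exact lt_of_le_of_lt (hbound n p hp) hn
    exact hu.continuousOn (Filter.Frequently.of_forall fun n => (hcont n).continuousOn)
  -- the advantage function D
  set D : ℝ → ℝ := fun p => M.HPval V p - M.LPval V p with hD
  have hmin : ∀ p ∈ Set.Icc (0:ℝ) 1, V p = min (M.LPval V p) (M.HPval V p) :=
    fun p hp => hfix p hp
  have hDconv : ConvexOn ℝ (Set.Icc (0:ℝ) 1) D := by
    have h1 := (CouponModel.affine_convexOn (M.CHN + M.β * V M.lNA - M.CL)
        (M.CHA - M.CHN + M.β * (V M.lAA - V M.lNA))).sub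
        ((M.comp_T_concaveOn hVconc).smul hβ0)
    have heq : ((fun p : ℝ => (M.CHN + M.β * V M.lNA - M.CL)
        + p * (M.CHA - M.CHN + M.β * (V M.lAA - V M.lNA)))
        - fun p => M.β • V (M.T p)) = D := by
      funext p
      simp only [hD, Pi.sub_apply, Pi.smul_apply, smul_eq_mul]
      unfold CouponModel.HPval CouponModel.LPval
      ring
    rwa [heq] at h1
  have hDcont : ContinuousOn D (Set.Icc (0:ℝ) 1) := by
    have hTc : ContinuousOn (fun p => V (M.T p)) (Set.Icc (0:ℝ) 1) :=
      hVcont.comp (M.T_continuous).continuousOn (fun p hp => M.T_mem hp)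
    apply ContinuousOn.sub
    · unfold CouponModel.HPval; fun_prop
    · unfold CouponModel.LPval
      exact continuousOn_const.add (continuousOn_const.mul hTc)
  have hT0 : M.T 0 = M.lNA := by unfold CouponModel.T; ring
  have hT1 : M.T 1 = M.lAA := by unfold CouponModel.T; ring
  have hD0 : D 0 ≤ 0 := by
    have e : D 0 = M.CHN - M.CL := by
      simp only [hD]; unfold CouponModel.HPval CouponModel.LPval; rw [hT0]; ring
    rw [e]; linarith [M.CHN_le_CL]
  have hD1 : 0 ≤ D 1 := by
    have e : D 1 = M.CHA - M.CL := by
      simp only [hD]; unfold CouponModel.HPval CouponModel.LPval; rw [hT1]; ring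
    rw [e]; linarith [M.CL_le_CHA]
  -- the threshold
  set S : Set ℝ := Set.Icc (0:ℝ) 1 ∩ D ⁻¹' Set.Iic 0 with hS
  have h0S : (0:ℝ) ∈ S := ⟨⟨le_refl 0, zero_le_one⟩, hD0⟩
  have hSbdd : BddAbove S := ⟨1, fun p hp => hp.1.2⟩
  have hSclosed : IsClosed S :=
    hDcont.preimage_isClosed_of_isClosed isClosed_Icc isClosed_Iic
  set τ := sSup S with hτdef
  have hτS : τ ∈ S := hSclosed.csSup_mem ⟨0, h0S⟩ hSbdd
  have hτ0 : 0 ≤ τ := hτS.1.1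
  have hτ1 : τ ≤ 1 := hτS.1.2
  have hDτ : D τ ≤ 0 := hτS.2
  have hgt : ∀ q, τ < q → q ≤ 1 → 0 < D q := by
    intro q hq hq1
    by_contra h
    push_neg at h
    have hqS : q ∈ S := ⟨⟨hτ0.trans hq.le, hq1⟩, h⟩
    exact absurd (le_csSup hSbdd hqS) (not_le.mpr hq)
  refine ⟨τ, ⟨hτ0, hτ1⟩, ?_, ?_⟩
  · -- HP region
    intro p hp
    have hp1 : p ∈ Set.Icc (0:ℝ) 1 := ⟨hp.1, hp.2.trans hτ1⟩
    have hDp : D p ≤ 0 := by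
      rcases eq_or_lt_of_le hp.2 with h | h
      · rw [h]; exact hDτ
      · have hτpos : 0 < τ := lt_of_le_of_lt hp.1 h
        have hb0 : 0 ≤ p / τ := div_nonneg hp.1 hτpos.le
        have hb1 : p / τ ≤ 1 := (div_le_one hτpos).mpr hp.2
        have hcv := hDconv.2 (⟨le_refl 0, zero_le_one⟩ : (0:ℝ) ∈ Set.Icc (0:ℝ) 1)
          hτS.1 (by linarith : (0:ℝ) ≤ 1 - p / τ) hb0 (by ring)
        have harg : (1 - p / τ) • (0:ℝ) + (p / τ) • τ = p := by
          simp only [smul_eq_mul, mul_zero, zero_add]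
          field_simp
        rw [harg] at hcv
        have hcv' : D p ≤ (1 - p / τ) * D 0 + (p / τ) * D τ := by
          simpa [smul_eq_mul] using hcv
        have hm1 : (1 - p / τ) * D 0 ≤ 0 :=
          mul_nonpos_of_nonneg_of_nonpos (by linarith) hD0
        have hm2 : (p / τ) * D τ ≤ 0 :=
          mul_nonpos_of_nonneg_of_nonpos hb0 hDτ
        exact hcv'.trans (add_nonpos hm1 hm2)
    rw [hmin p hp1]
    refine min_eq_right ?_
    have := hDp
    simp only [hD] at this
    linarith
  · -- LP region
    intro p hp
    have hp1 : p ∈ Set.Icc (0:ℝ) 1 := ⟨hτ0.trans hp.1, hp.2⟩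
    have hDp : 0 ≤ D p := by
      rcases eq_or_lt_of_le hp.1 with h | h
      · rw [← h]
        by_cases hτe : τ = 1
        · rw [hτe]; exact hD1
        · have hτlt : τ < 1 := lt_of_le_of_ne hτ1 hτe
          have hne : (nhdsWithin τ (Set.Ioc τ 1)).NeBot := left_nhdsWithin_Ioc_neBot hτlt
          have htd : Filter.Tendsto D (nhdsWithin τ (Set.Ioc τ 1)) (nhds (D τ)) :=
            (hDcont τ hτS.1).mono_left
              (nhdsWithin_mono τ (fun q hq => ⟨hτ0.trans hq.1.le, hq.2⟩))
          exact ge_of_tendsto htd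
            (eventually_mem_nhdsWithin.mono (fun q hq => (hgt q hq.1 hq.2).le))
      · exact (hgt p h hp.2).le
    rw [hmin p hp1]
    refine min_eq_left ?_
    simp only [hD] at hDp
    linarith
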